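/- Let D be an n×n nonnegative real demand matrix, let δ > 0 and s ≥ 1, and consider a schedule of D over s parallel switches with reconfiguration delay δ that covers D. Suppose some row or some column of D has exactly s nonzero entries, whose values listed in non-increasing order are x₁ ≥ x₂ ≥ ⋯ ≥ x_s > 0. If the schedule uses s + m configurations in total across all switches for some m with 0 ≤ m ≤ s − 1, then the makespan of the schedule is at least δ + x_{m+1}. -/

import Mathlib

open Finset

/-- A configuration of an optical switch: a permutation of the `n` ports
together with a (time) weight. -/
abbrev Config (n : ℕ) := Equiv.Perm (Fin n) × ℝ

/-- A schedule over `s` parallel switches assigns to each switch a finite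
list of configurations. -/
abbrev Schedule (n s : ℕ) := Fin s → List (Config n)

/-- All configuration weights of the schedule are positive. -/
def ValidWeights {n s : ℕ} (S : Schedule n s) : Prop :=
  ∀ h : Fin s, ∀ c ∈ S h, 0 < c.2

/-- Total weight of all configurations (over all switches) servicing entry `(i, j)`,
i.e. whose permutation maps `i` to `j`. -/
def servedWeight {n s : ℕ} (S : Schedule n s) (i j : Fin n) : ℝ :=
  ∑ h : Fin s, (((S h).filter (fun c => decide (c.1 i = j))).map Prod.snd).sum

/-- The schedule covers the demand matrix `D`. -/
def Covers {n s : ℕ} (D : Matrix (Fin n) (Fin n) ℝ) (S : Schedule n s) : Prop :=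
  ∀ i j : Fin n, D i j ≤ servedWeight S i j

/-- The load of switch `h`: each configuration contributes the reconfiguration
delay `δ` plus its weight. -/
def load {n s : ℕ} (δ : ℝ) (S : Schedule n s) (h : Fin s) : ℝ :=
  ((S h).map (fun c => δ + c.2)).sum

/-- The makespan of the schedule: the maximum load over the switches. -/
noncomputable def makespan {n s : ℕ} (δ : ℝ) (S : Schedule n s) : ℝ :=
  ⨆ h : Fin s, load δ S h


lemma sum_filter_length_le {α ι : Type*} (T : Finset ι) (p : ι → α → Bool)
    (hp : ∀ c, ∀ a ∈ T, ∀ b ∈ T, p a c → p b c → a = b) (l : List α) :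
    ∑ a ∈ T, (l.filter (p a)).length ≤ l.length := by
  induction l with
  | nil => simp
  | cons c l ih =>
    have h1 : ∑ a ∈ T, ((c :: l).filter (p a)).length
        = (∑ a ∈ T, if p a c then 1 else 0) + ∑ a ∈ T, (l.filter (p a)).length := by
      rw [← Finset.sum_add_distrib]
      refine Finset.sum_congr rfl fun a _ => ?_
      by_cases h : p a c <;> simp [List.filter_cons, h, Nat.add_comm]
    have h2 : (∑ a ∈ T, if p a c then 1 else 0) ≤ 1 := by
      have : (∑ a ∈ T, if p a c then 1 else 0) = (T.filter (fun a => p a c)).card := by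
        rw [Finset.card_filter]
      rw [this]
      exact Finset.card_le_one.2 fun a ha b hb =>
        hp c a (Finset.mem_filter.1 ha).1 b (Finset.mem_filter.1 hb).1
          (Finset.mem_filter.1 ha).2 (Finset.mem_filter.1 hb).2
    simp only [h1, List.length_cons]
    omega

lemma key_lemma {n s : ℕ} (hs : 1 ≤ s) (δ : ℝ) (hδ : 0 < δ)
    (S : Schedule n s) (hval : ValidWeights S)
    (x : ℕ → ℝ)
    (hxpos : ∀ j, 1 ≤ j → j ≤ s → 0 < x j)
    (hxanti : ∀ j₁ j₂, 1 ≤ j₁ → j₁ ≤ j₂ → j₂ ≤ s → x j₂ ≤ x j₁)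
    (m : ℕ) (hm : m ≤ s - 1)
    (htot : ∑ h : Fin s, (S h).length = s + m)
    (T : Finset (Fin n)) (v : Fin n → ℝ)
    (p : Fin n → Config n → Bool)
    (hp : ∀ c a b, p a c → p b c → a = b)
    (hserv : ∀ a ∈ T, v a ≤ ∑ h : Fin s, (((S h).filter (p a)).map Prod.snd).sum)
    (hmul : T.val.map v = (Multiset.range s).map (fun l => x (l+1))) :
    δ + x (m+1) ≤ makespan δ S := by
  have hms : m + 1 ≤ s := by omega
  -- positivity of values on T
  have hvpos : ∀ a ∈ T, 0 < v a := by
    intro a ha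
    have : v a ∈ (Multiset.range s).map (fun l => x (l+1)) := by
      rw [← hmul]; exact Multiset.mem_map_of_mem v ha
    obtain ⟨l, hl, hlv⟩ := Multiset.mem_map.1 this
    rw [← hlv]
    exact hxpos (l+1) (by omega) (by have := Multiset.mem_range.1 hl; omega)
  set cnt : Fin n → ℕ := fun a => ∑ h : Fin s, ((S h).filter (p a)).length with hcnt
  have hcnt1 : ∀ a ∈ T, 1 ≤ cnt a := by
    intro a ha
    by_contra hlt
    have hz : cnt a = 0 := by omega
    have hzero : ∀ h : Fin s, ((S h).filter (p a)).length = 0 := by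
      intro h
      have := (Finset.sum_eq_zero_iff.1 hz) h (Finset.mem_univ h)
      exact this
    have : v a ≤ 0 := by
      have := hserv a ha
      calc v a ≤ _ := this
        _ = 0 := by
          apply Finset.sum_eq_zero
          intro h _
          rw [List.length_eq_zero_iff.1 (hzero h)]
          simp
    linarith [hvpos a ha]
  have hTcard : T.card = s := by
    have := congrArg Multiset.card hmul
    simpa using this
  have hsum : ∑ a ∈ T, cnt a ≤ s + m := by
    rw [← htot]
    rw [Finset.sum_comm]
    apply Finset.sum_le_sum
    intro h _
    exact sum_filter_length_le T p (fun c a _ b _ => hp c a b) (S h)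
  set B := T.filter (fun a => 2 ≤ cnt a) with hBdef
  have hB : B.card ≤ m := by
    have hBsub : B ⊆ T := Finset.filter_subset _ _
    have hBcard : B.card ≤ T.card := Finset.card_le_card hBsub
    have h1 : (T \ B).card = T.card - B.card := Finset.card_sdiff_of_subset hBsub
    have hsplit : ∑ a ∈ T \ B, cnt a + ∑ a ∈ B, cnt a = ∑ a ∈ T, cnt a :=
      Finset.sum_sdiff hBsub
    have hb : 2 * B.card ≤ ∑ a ∈ B, cnt a := by
      calc 2 * B.card = ∑ _a ∈ B, 2 := by rw [Finset.sum_const, smul_eq_mul, Nat.mul_comm]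
        _ ≤ ∑ a ∈ B, cnt a :=
          Finset.sum_le_sum fun a ha => (Finset.mem_filter.1 ha).2
    have hnb : (T \ B).card ≤ ∑ a ∈ T \ B, cnt a := by
      calc (T \ B).card = ∑ _a ∈ T \ B, 1 := by
            rw [Finset.sum_const, smul_eq_mul, Nat.mul_one]
        _ ≤ _ := Finset.sum_le_sum fun a ha => hcnt1 a (Finset.mem_sdiff.1 ha).1
    omega
  set A := T.filter (fun a => x (m+1) ≤ v a) with hAdef
  have hA : m + 1 ≤ A.card := by
    have hc := congrArg (Multiset.countP (fun y => x (m+1) ≤ y)) hmul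
    rw [Multiset.countP_map, Multiset.countP_map] at hc
    have hlhs : Multiset.card (T.val.filter (fun a => x (m+1) ≤ v a)) = A.card := by
      rw [hAdef]
      rfl
    have hsub : Finset.range (m+1) ⊆ (Finset.range s).filter (fun l => x (m+1) ≤ x (l+1)) := by
      intro l hl
      have hl' := Finset.mem_range.1 hl
      refine Finset.mem_filter.2 ⟨Finset.mem_range.2 (by omega), ?_⟩
      exact hxanti (l+1) (m+1) (by omega) (by omega) hms
    have hrhs : Multiset.card ((Multiset.range s).filter (fun l => x (m+1) ≤ x (l+1)))
        = ((Finset.range s).filter (fun l => x (m+1) ≤ x (l+1))).card := by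
      rfl
    have := Finset.card_le_card hsub
    rw [Finset.card_range] at this
    omega
  -- find a ∈ A with cnt a = 1
  have hns : ¬ A ⊆ B := by
    intro h
    have := Finset.card_le_card h
    omega
  obtain ⟨a, haA, haB⟩ := Finset.not_subset.1 hns
  have haT : a ∈ T := (Finset.mem_filter.1 haA).1
  have hax : x (m+1) ≤ v a := (Finset.mem_filter.1 haA).2
  have hacnt : cnt a = 1 := by
    have h1 := hcnt1 a haT
    have h2 : ¬ 2 ≤ cnt a := fun h => haB (Finset.mem_filter.2 ⟨haT, h⟩)
    omega
  -- extract the unique switch and configuration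
  have hex : ∃ h₀ : Fin s, ((S h₀).filter (p a)).length ≠ 0 := by
    by_contra h
    push_neg at h
    have : cnt a = 0 := Finset.sum_eq_zero fun h' _ => h h'
    omega
  obtain ⟨h₀, hh₀⟩ := hex
  have hle : ((S h₀).filter (p a)).length ≤ cnt a :=
    Finset.single_le_sum (f := fun h => ((S h).filter (p a)).length)
      (fun _ _ => Nat.zero_le _) (Finset.mem_univ h₀)
  have hlen1 : ((S h₀).filter (p a)).length = 1 := by omega
  have hzero : ∀ h : Fin s, h ≠ h₀ → ((S h).filter (p a)).length = 0 := by
    intro h hne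
    have hsplit : cnt a = ((S h₀).filter (p a)).length
        + ∑ h' ∈ Finset.univ.erase h₀, ((S h').filter (p a)).length := by
      rw [hcnt]
      exact (Finset.add_sum_erase _ _ (Finset.mem_univ h₀)).symm
    have hz : ∑ h' ∈ Finset.univ.erase h₀, ((S h').filter (p a)).length = 0 := by omega
    exact (Finset.sum_eq_zero_iff.1 hz) h (Finset.mem_erase.2 ⟨hne, Finset.mem_univ h⟩)
  obtain ⟨c, hc⟩ := List.length_eq_one_iff.1 hlen1
  have hcmem : c ∈ S h₀ := by
    have : c ∈ (S h₀).filter (p a) := by rw [hc]; simp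
    exact List.mem_of_mem_filter this
  have hva : v a ≤ c.2 := by
    have := hserv a haT
    have heq : ∑ h : Fin s, (((S h).filter (p a)).map Prod.snd).sum = c.2 := by
      rw [Finset.sum_eq_single h₀]
      · rw [hc]; simp
      · intro h _ hne
        rw [List.length_eq_zero_iff.1 (hzero h hne)]
        simp
      · intro h; exact absurd (Finset.mem_univ h₀) h
    linarith [heq ▸ this]
  have hload : δ + c.2 ≤ load δ S h₀ := by
    apply List.single_le_sum
    · intro y hy
      obtain ⟨c', hc', rfl⟩ := List.mem_map.1 hy
      have := hval h₀ c' hc'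
      linarith
    · exact List.mem_map_of_mem hcmem
  have hmk : load δ S h₀ ≤ makespan δ S :=
    le_ciSup (Set.Finite.bddAbove (Set.finite_range _)) h₀
  linarith

/-- If some row or some column of `D` has exactly `s` nonzero entries, whose
values in non-increasing order are `x 1 ≥ x 2 ≥ ⋯ ≥ x s > 0` (with `x j = 0`
for `j > s`), and the covering schedule uses `s + m` configurations in total
with `0 ≤ m ≤ s - 1`, then the makespan is at least `δ + x (m+1)`. -/
theorem makespan_ge_delta_add_x_succ_m {n s : ℕ} (hs : 1 ≤ s)
    (D : Matrix (Fin n) (Fin n) ℝ) (hD : ∀ i j, 0 ≤ D i j)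
    (δ : ℝ) (hδ : 0 < δ)
    (S : Schedule n s) (hval : ValidWeights S) (hcov : Covers D S)
    (x : ℕ → ℝ)
    (hxpos : ∀ j, 1 ≤ j → j ≤ s → 0 < x j)
    (hxanti : ∀ j₁ j₂, 1 ≤ j₁ → j₁ ≤ j₂ → j₂ ≤ s → x j₂ ≤ x j₁)
    (hx0 : ∀ j, s < j → x j = 0)
    (hrc :
      (∃ i, ((univ.filter fun j => D i j ≠ 0).val.map fun j => D i j)
          = (Multiset.range s).map fun l => x (l + 1)) ∨
      (∃ j, ((univ.filter fun i => D i j ≠ 0).val.map fun i => D i j)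
          = (Multiset.range s).map fun l => x (l + 1)))
    (m : ℕ) (hm : m ≤ s - 1)
    (htot : ∑ h : Fin s, (S h).length = s + m) :
    δ + x (m + 1) ≤ makespan δ S := by
  rcases hrc with ⟨i, hi⟩ | ⟨j, hj⟩
  · refine key_lemma hs δ hδ S hval x hxpos hxanti m hm htot
      (univ.filter fun j => D i j ≠ 0) (fun j => D i j)
      (fun a c => decide (c.1 i = a)) ?_ ?_ hi
    · intro c a b ha hb
      have ha' : c.1 i = a := of_decide_eq_true ha
      have hb' : c.1 i = b := of_decide_eq_true hb
      rw [← ha', hb']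
    · intro a _
      simpa [servedWeight] using hcov i a
  · refine key_lemma hs δ hδ S hval x hxpos hxanti m hm htot
      (univ.filter fun i => D i j ≠ 0) (fun i => D i j)
      (fun a c => decide (c.1 a = j)) ?_ ?_ hj
    · intro c a b ha hb
      have ha' : c.1 a = j := of_decide_eq_true ha
      have hb' : c.1 b = j := of_decide_eq_true hb
      exact c.1.injective (ha'.trans hb'.symm)
    · intro a _
      simpa [servedWeight] using hcov a j
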